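/- Tracking lemma: let (w_s)_{s≥1} be vectors in the K-simplex and define pulls by k_t ∈ argmin_{k∈[K]} (N_{t−1}^k − Σ_{s=1}^t w_s^k) with N_t^k = Σ_{s≤t} 1{k_s = k} and N_0 = 0. Then for all t ≥ 0 and all k ∈ [K], −ln(K) ≤ N_t^k − Σ_{s=1}^t w_s^k ≤ 1. -/

import Mathlib

/-- Tracking lemma: pulling at each round an arm minimising the deficit
`N_{t-1}^k − Σ_{s≤t} w_s^k` keeps every deficit `N_t^k − Σ_{s≤t} w_s^k`
in the interval `[−ln K, 1]`. (Rounds are indexed from `0` here, so round `t`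
of the statement corresponds to `Finset.range t`.) -/
theorem tracking_lemma {K : ℕ} (hK : 0 < K)
    (w : ℕ → Fin K → ℝ) (hw : ∀ s, w s ∈ stdSimplex ℝ (Fin K))
    (k : ℕ → Fin K)
    (N : ℕ → Fin K → ℕ)
    (hN : ∀ t i, N t i = ((Finset.range t).filter (fun s => k s = i)).card)
    (hsel : ∀ t, ∀ j : Fin K,
      (N t (k t) : ℝ) - ∑ s ∈ Finset.range (t + 1), w s (k t) ≤
        (N t j : ℝ) - ∑ s ∈ Finset.range (t + 1), w s j) :
    ∀ t, ∀ i : Fin K,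
      -Real.log K ≤ (N t i : ℝ) - ∑ s ∈ Finset.range t, w s i ∧
      (N t i : ℝ) - ∑ s ∈ Finset.range t, w s i ≤ 1 := by
  have hw0 : ∀ s i, 0 ≤ w s i := fun s i => (hw s).1 i
  have hw1 : ∀ s, ∑ i, w s i = 1 := fun s => (hw s).2
  set G : ℕ → Fin K → ℝ :=
    fun t i => (∑ s ∈ Finset.range t, w s i) - N t i with hG
  have hNcast : ∀ t i, (N t i : ℝ)
      = ∑ s ∈ Finset.range t, if k s = i then (1 : ℝ) else 0 := by
    intro t i
    rw [hN, Finset.card_filter]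
    push_cast
    simp
  have hGsucc : ∀ t j,
      G (t + 1) j = G t j + w t j - (if k t = j then 1 else 0) := by
    intro t j
    simp only [hG]
    rw [hNcast (t + 1) j, hNcast t j, Finset.sum_range_succ, Finset.sum_range_succ]
    ring
  have hGsum : ∀ t, ∑ j, G t j = 0 := by
    intro t
    simp only [hG]
    rw [Finset.sum_sub_distrib]
    have h1 : ∑ j, ∑ s ∈ Finset.range t, w s j = t := by
      rw [Finset.sum_comm]
      simp [hw1]
    have h2 : ∑ j, (N t j : ℝ) = t := by
      simp only [hNcast]
      rw [Finset.sum_comm]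
      simp
    rw [h1, h2]; ring
  have hwS : ∀ s (S : Finset (Fin K)), ∑ j ∈ S, w s j ≤ 1 := by
    intro s S
    rw [← hw1 s]
    exact Finset.sum_le_sum_of_subset_of_nonneg (Finset.subset_univ S)
      (fun j _ _ => hw0 s j)
  have hcardK : ∀ S : Finset (Fin K), (S.card : ℝ) ≤ K := by
    intro S
    have h := Finset.card_le_univ S
    simp only [Finset.card_univ, Fintype.card_fin] at h
    exact_mod_cast h
  -- the key invariant
  have key : ∀ t (S : Finset (Fin K)),
      ∑ j ∈ S, G t j ≤ S.card * (Real.log K - Real.log S.card) := by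
    intro t
    induction t with
    | zero =>
      intro S
      have h0 : ∑ j ∈ S, G 0 j = 0 := by simp [hG, hN]
      rw [h0]
      rcases Nat.eq_zero_or_pos S.card with hc | hc
      · simp [hc]
      · have hlog : Real.log S.card ≤ Real.log K :=
          Real.log_le_log (by exact_mod_cast hc) (hcardK S)
        have : (0:ℝ) ≤ S.card := by positivity
        nlinarith
    | succ t ih =>
      intro S
      have hrw : ∑ j ∈ S, G (t + 1) j
          = (∑ j ∈ S, (G t j + w t j)) - (if k t ∈ S then 1 else 0) := by
        simp only [hGsucc]
        rw [Finset.sum_sub_distrib, Finset.sum_ite_eq]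
      by_cases hiS : k t ∈ S
      · rw [hrw, if_pos hiS, Finset.sum_add_distrib]
        have h1 := ih S
        have h2 := hwS t S
        linarith
      · rcases S.eq_empty_or_nonempty with rfl | hSne
        · simp
        rw [hrw, if_neg hiS, sub_zero]
        have hmax : ∀ j, G t j + w t j ≤ G t (k t) + w t (k t) := by
          intro j
          have h := hsel t j
          rw [Finset.sum_range_succ, Finset.sum_range_succ] at h
          simp only [hG]
          linarith
        have hcard' : (insert (k t) S).card = S.card + 1 :=
          Finset.card_insert_of_notMem hiS
        have hm1 : (1:ℝ) ≤ (S.card : ℝ) := by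
          exact_mod_cast Finset.card_pos.mpr hSne
        have hm0 : (0:ℝ) < (S.card : ℝ) := by linarith
        have hm10 : (0:ℝ) < (S.card : ℝ) + 1 := by linarith
        have hins : ∑ j ∈ insert (k t) S, (G t j + w t j)
            = (G t (k t) + w t (k t)) + ∑ j ∈ S, (G t j + w t j) :=
          Finset.sum_insert hiS
        have hboundS : ∑ j ∈ S, (G t j + w t j)
            ≤ (S.card : ℝ) * (G t (k t) + w t (k t)) := by
          have h := Finset.sum_le_card_nsmul S (fun j => G t j + w t j)
            (G t (k t) + w t (k t)) (fun j _ => hmax j)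
          rwa [nsmul_eq_mul] at h
        have hA : G t (k t) + w t (k t)
            = (∑ j ∈ insert (k t) S, (G t j + w t j))
              - ∑ j ∈ S, (G t j + w t j) := by linarith
        rw [hA] at hboundS
        have hSins : ∑ j ∈ insert (k t) S, G t j
            ≤ ((S.card : ℝ) + 1) * (Real.log K - Real.log ((S.card : ℝ) + 1)) := by
          have h := ih (insert (k t) S)
          rw [hcard'] at h
          push_cast at h
          exact h
        have hwins : ∑ j ∈ insert (k t) S, w t j ≤ 1 := hwS t _
        have hinsG : ∑ j ∈ insert (k t) S, (G t j + w t j)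
            = (∑ j ∈ insert (k t) S, G t j) + ∑ j ∈ insert (k t) S, w t j :=
          Finset.sum_add_distrib
        have hCle : ∑ j ∈ insert (k t) S, (G t j + w t j)
            ≤ ((S.card : ℝ) + 1) * (Real.log K - Real.log ((S.card : ℝ) + 1)) + 1 := by
          rw [hinsG]; linarith
        have hTC : ((S.card : ℝ) + 1) * (∑ j ∈ S, (G t j + w t j))
            ≤ (S.card : ℝ) * (∑ j ∈ insert (k t) S, (G t j + w t j)) := by
          nlinarith [hboundS, hm0]
        -- log inequality : 1 ≤ (m+1) (log (m+1) - log m)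
        have hlog : Real.log (S.card : ℝ) - Real.log ((S.card : ℝ) + 1)
            ≤ (S.card : ℝ) / ((S.card : ℝ) + 1) - 1 := by
          have h1 : (0:ℝ) < (S.card : ℝ) / ((S.card : ℝ) + 1) := div_pos hm0 hm10
          have h2 := Real.log_le_sub_one_of_pos h1
          rwa [Real.log_div (ne_of_gt hm0) (ne_of_gt hm10)] at h2
        have hlog' : 1 ≤ ((S.card : ℝ) + 1)
            * (Real.log ((S.card : ℝ) + 1) - Real.log (S.card : ℝ)) := by
          have h2 : (S.card : ℝ) / ((S.card : ℝ) + 1) - 1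
              = -(1 / ((S.card : ℝ) + 1)) := by rw [div_sub_one (ne_of_gt hm10)]; ring
          rw [h2] at hlog
          have h3 : 1 / ((S.card : ℝ) + 1)
              ≤ Real.log ((S.card : ℝ) + 1) - Real.log (S.card : ℝ) := by linarith
          calc (1:ℝ) = ((S.card : ℝ) + 1) * (1 / ((S.card : ℝ) + 1)) := (mul_one_div_cancel (ne_of_gt hm10)).symm
            _ ≤ _ := mul_le_mul_of_nonneg_left h3 (le_of_lt hm10)
        have hgoal : ((S.card : ℝ) + 1) * (∑ j ∈ S, (G t j + w t j))
            ≤ ((S.card : ℝ) + 1)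
              * ((S.card : ℝ) * (Real.log K - Real.log (S.card : ℝ))) := by
          nlinarith [hTC, hCle, hlog', hm0, hm10]
        exact le_of_mul_le_mul_left hgoal hm10
  -- conclusion
  intro t i
  have hGi : G t i = (∑ s ∈ Finset.range t, w s i) - N t i := rfl
  constructor
  · have h1 := key t {i}
    simp only [Finset.sum_singleton, Finset.card_singleton, Nat.cast_one,
      Real.log_one, sub_zero, one_mul] at h1
    rw [hGi] at h1
    linarith
  · have h2 := key t (Finset.univ.erase i)
    have hsplit : ∑ j ∈ Finset.univ.erase i, G t j = -(G t i) := by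
      have h := hGsum t
      rw [← Finset.add_sum_erase _ _ (Finset.mem_univ i)] at h
      linarith
    have hcard : ((Finset.univ.erase i).card : ℝ) = (K : ℝ) - 1 := by
      rw [Finset.card_erase_of_mem (Finset.mem_univ i)]
      simp only [Finset.card_univ, Fintype.card_fin]
      rw [Nat.cast_sub hK]
      simp
    rw [hsplit, hcard] at h2
    have hfinal : ((K:ℝ) - 1) * (Real.log K - Real.log ((K:ℝ) - 1)) ≤ 1 := by
      rcases Nat.lt_or_ge K 2 with hK2 | hK2
      · have hK1 : K = 1 := by omega
        subst hK1
        norm_num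
      · have hKr : (2:ℝ) ≤ K := by exact_mod_cast hK2
        have hn0 : (0:ℝ) < (K:ℝ) - 1 := by linarith
        have hKpos : (0:ℝ) < K := by linarith
        have h1 : (0:ℝ) < (K:ℝ) / ((K:ℝ) - 1) := by positivity
        have h5 := Real.log_le_sub_one_of_pos h1
        rw [Real.log_div (ne_of_gt hKpos) (ne_of_gt hn0)] at h5
        have h7 : (K:ℝ) / ((K:ℝ) - 1) - 1 = 1 / ((K:ℝ) - 1) := by field_simp; ring
        have h6 : Real.log K - Real.log ((K:ℝ) - 1) ≤ 1 / ((K:ℝ) - 1) := by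
          rw [h7] at h5; linarith
        calc ((K:ℝ) - 1) * (Real.log K - Real.log ((K:ℝ) - 1))
            ≤ ((K:ℝ) - 1) * (1 / ((K:ℝ) - 1)) :=
              mul_le_mul_of_nonneg_left h6 (le_of_lt hn0)
          _ = 1 := by field_simp
    rw [hGi] at h2
    linarith
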